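/- (Proposition 1) If r ≤ m, then every solution (S, I) of the reduced system on [0,∞) with nonnegative initial conditions S(0) ≥ 0, I(0) ≥ 0 satisfies (S(t), I(t)) → (0, 0) as t → ∞. -/

import Mathlib

open Filter Topology

/-- `(S, I)` is a solution of the reduced system on `[0, ∞)`. -/
def IsSol (r m β γ μ cSS cSI cIS cII a : ℝ) (S I : ℝ → ℝ) : Prop :=
  ∀ t : ℝ, 0 ≤ t →
    HasDerivAt S (r * S t + a * r * I t - m * S t
      - (cSS * S t + cSI * I t) * S t - β * S t * I t + γ * I t) t ∧
    HasDerivAt I (-(m * I t) - (cIS * S t + cII * I t) * I t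
      + β * S t * I t - γ * I t - μ * I t) t

/-- `(s, i)` is an equilibrium point of the reduced system. -/
def IsEquilibrium (r m β γ μ cSS cSI cIS cII a : ℝ) (s i : ℝ) : Prop :=
  r * s + a * r * i - m * s - (cSS * s + cSI * i) * s - β * s * i + γ * i = 0 ∧
  -(m * i) - (cIS * s + cII * i) * i + β * s * i - γ * i - μ * i = 0

/-- All parameters are positive and `a ∈ (0, 1)`. -/
def ParamsPos (r m β γ μ cSS cSI cIS cII a : ℝ) : Prop :=
  0 < r ∧ 0 < m ∧ 0 < β ∧ 0 < γ ∧ 0 < μ ∧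
    0 < cSS ∧ 0 < cSI ∧ 0 < cIS ∧ 0 < cII ∧ 0 < a ∧ a < 1

open Set

lemma eq_zero_of_gronwall {E : Type*} [NormedAddCommGroup E] [NormedSpace ℝ E]
    {f f' : ℝ → E} {K a b : ℝ}
    (hf : ContinuousOn f (Set.Icc a b))
    (hf' : ∀ x ∈ Set.Ico a b, HasDerivWithinAt f (f' x) (Set.Ici x) x)
    (ha : f a = 0)
    (bound : ∀ x ∈ Set.Ico a b, ‖f' x‖ ≤ K * ‖f x‖) :
    ∀ x ∈ Set.Icc a b, f x = 0 := by
  intro x hx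
  have h := norm_le_gronwallBound_of_norm_deriv_right_le (δ := 0) (ε := 0) hf hf'
    (by simp [ha]) (fun y hy => by simpa using bound y hy) x hx
  rw [gronwallBound_ε0_δ0] at h
  simpa using le_antisymm h (norm_nonneg _)

lemma sol_nonneg (r m β γ μ cSS cSI cIS cII a : ℝ)
    (hp : ParamsPos r m β γ μ cSS cSI cIS cII a)
    (S I : ℝ → ℝ) (hsol : IsSol r m β γ μ cSS cSI cIS cII a S I)
    (hS0 : 0 ≤ S 0) (hI0 : 0 ≤ I 0) :
    ∀ t, 0 ≤ t → 0 ≤ S t ∧ 0 ≤ I t := by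
  obtain ⟨hr, hm, hβ, hγ, hμ, hcSS, hcSI, hcIS, hcII, ha0, ha1⟩ := hp
  have hScont : ContinuousOn S (Set.Ici 0) :=
    fun t ht => (hsol t ht).1.continuousAt.continuousWithinAt
  have hIcont : ContinuousOn I (Set.Ici 0) :=
    fun t ht => (hsol t ht).2.continuousAt.continuousWithinAt
  by_contra hcon
  push_neg at hcon
  obtain ⟨t1, ht1, hbad⟩ := hcon
  have hbad' : S t1 < 0 ∨ I t1 < 0 := by
    by_contra h
    push_neg at h
    exact absurd (hbad h.1) (not_lt.2 h.2)
  set A : Set ℝ := {t | t ∈ Set.Icc 0 t1 ∧ (S t < 0 ∨ I t < 0)} with hA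
  have hA1 : t1 ∈ A := ⟨⟨ht1, le_refl _⟩, hbad'⟩
  have hAne : A.Nonempty := ⟨t1, hA1⟩
  have hAbdd : BddBelow A := ⟨0, fun x hx => hx.1.1⟩
  set t0 := sInf A with ht0
  have ht0nonneg : 0 ≤ t0 := le_csInf hAne (fun x hx => hx.1.1)
  have ht0le : t0 ≤ t1 := csInf_le hAbdd hA1
  have happrox : ∀ δ > (0:ℝ), ∃ s ∈ A, s < t0 + δ := by
    intro δ hδ
    exact exists_lt_of_csInf_lt hAne (by linarith)
  have hAge : ∀ s ∈ A, t0 ≤ s := fun s hs => csInf_le hAbdd hs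
  have hAle : ∀ s ∈ A, s ≤ t1 := fun s hs => hs.1.2
  -- below t0 both are nonneg
  have hbelow : ∀ s, 0 ≤ s → s < t0 → 0 ≤ S s ∧ 0 ≤ I s := by
    intro s hs hst0
    by_contra h
    push_neg at h
    have hsA : s ∈ A := by
      refine ⟨⟨hs, le_trans hst0.le ht0le⟩, ?_⟩
      rcases lt_or_ge (S s) 0 with h1 | h1
      · exact Or.inl h1
      · exact Or.inr (h h1)
    exact absurd (hAge s hsA) (not_le.2 hst0)
  -- nonneg at t0 by left continuity
  have key : ∀ f : ℝ → ℝ, ContinuousOn f (Set.Ici 0) → 0 ≤ f 0 →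
      (∀ s, 0 ≤ s → s < t0 → 0 ≤ f s) → 0 ≤ f t0 := by
    intro f hf hf0 hpos
    rcases eq_or_lt_of_le ht0nonneg with h | h
    · rwa [← h]
    · have hne : (𝓝[Set.Ico 0 t0] t0).NeBot := by
        rw [← mem_closure_iff_nhdsWithin_neBot, closure_Ico (ne_of_lt h)]
        exact ⟨h.le, le_refl _⟩
      have htd : Filter.Tendsto f (𝓝[Set.Ico 0 t0] t0) (𝓝 (f t0)) :=
        (hf t0 h.le).mono_left (nhdsWithin_mono _ (fun x hx => hx.1))
      exact ge_of_tendsto htd (Filter.eventually_of_mem self_mem_nhdsWithin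
        (fun s hs => hpos s hs.1 hs.2))
  have hSt0 : 0 ≤ S t0 := key S hScont hS0 (fun s hs h => (hbelow s hs h).1)
  have hIt0 : 0 ≤ I t0 := key I hIcont hI0 (fun s hs h => (hbelow s hs h).2)
  -- bounds on [t0, t1]
  have hsub : Set.Icc t0 t1 ⊆ Set.Ici 0 := fun x hx => le_trans ht0nonneg hx.1
  obtain ⟨BS, hBS⟩ := (isCompact_Icc (a := t0) (b := t1)).exists_bound_of_continuousOn
    (hScont.mono hsub)
  obtain ⟨BI, hBI⟩ := (isCompact_Icc (a := t0) (b := t1)).exists_bound_of_continuousOn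
    (hIcont.mono hsub)
  have hBSnn : 0 ≤ BS := le_trans (norm_nonneg _) (hBS t0 ⟨le_refl _, ht0le⟩)
  have hBInn : 0 ≤ BI := le_trans (norm_nonneg _) (hBI t0 ⟨le_refl _, ht0le⟩)
  -- eventual positivity helper
  have evpos : ∀ f : ℝ → ℝ, ContinuousOn f (Set.Ici 0) → 0 < f t0 →
      ∃ u > t0, ∀ s ∈ Set.Ico t0 u, 0 < f s := by
    intro f hf hpos
    have h1 : Filter.Tendsto f (𝓝[Set.Ici t0] t0) (𝓝 (f t0)) :=
      (hf t0 ht0nonneg).mono_left (nhdsWithin_mono _ (fun x hx => le_trans ht0nonneg hx))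
    have h2 : ∀ᶠ s in 𝓝[Set.Ici t0] t0, 0 < f s := h1.eventually (eventually_gt_nhds hpos)
    rw [Filter.eventually_iff, mem_nhdsGE_iff_exists_Ico_subset] at h2
    obtain ⟨u, hu, hsub2⟩ := h2
    exact ⟨u, hu, fun s hs => hsub2 hs⟩
  -- helper producing two-sided bounds
  have two : ∀ (k u B : ℝ), 0 ≤ k → |u| ≤ B → -(k*B) ≤ k*u ∧ k*u ≤ k*B := by
    intro k u B hk hu
    have h1 := mul_le_mul_of_nonneg_left (neg_le_of_abs_le hu) hk
    have h2 := mul_le_mul_of_nonneg_left (le_of_abs_le hu) hk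
    constructor <;> linarith
  -- scalar Gronwall bound for I
  have hIderiv : ∀ x ∈ Set.Ico t0 t1, HasDerivWithinAt I
      (-(m * I x) - (cIS * S x + cII * I x) * I x + β * S x * I x - γ * I x - μ * I x)
      (Set.Ici x) x :=
    fun x hx => ((hsol x (le_trans ht0nonneg hx.1)).2).hasDerivWithinAt
  have hIbound : ∀ x ∈ Set.Ico t0 t1,
      ‖(-(m * I x) - (cIS * S x + cII * I x) * I x + β * S x * I x - γ * I x - μ * I x)‖
        ≤ (m + cIS * BS + cII * BI + β * BS + γ + μ) * ‖I x‖ := by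
    intro x hx
    have h1 : |S x| ≤ BS := by simpa [Real.norm_eq_abs] using hBS x ⟨hx.1, hx.2.le⟩
    have h2 : |I x| ≤ BI := by simpa [Real.norm_eq_abs] using hBI x ⟨hx.1, hx.2.le⟩
    have heq : (-(m * I x) - (cIS * S x + cII * I x) * I x + β * S x * I x - γ * I x - μ * I x)
        = (-m - (cIS * S x + cII * I x) + β * S x - γ - μ) * I x := by ring
    rw [Real.norm_eq_abs, Real.norm_eq_abs, heq, abs_mul]
    apply mul_le_mul_of_nonneg_right _ (abs_nonneg _)
    rw [abs_le]
    obtain ⟨q1, q2⟩ := two cIS (S x) BS hcIS.le h1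
    obtain ⟨q3, q4⟩ := two cII (I x) BI hcII.le h2
    obtain ⟨q5, q6⟩ := two β (S x) BS hβ.le h1
    constructor <;> linarith
  rcases eq_or_lt_of_le hIt0 with hI0t | hI0t
  · -- Case I t0 = 0 : I vanishes on [t0, t1]
    have IZ : ∀ x ∈ Set.Icc t0 t1, I x = 0 :=
      eq_zero_of_gronwall (hIcont.mono hsub) hIderiv hI0t.symm hIbound
    rcases eq_or_lt_of_le hSt0 with hS0t | hS0t
    · -- both zero at t0 : pair Gronwall
      have hfz : ∀ x ∈ Set.Icc t0 t1, (fun t => (S t, I t)) x = 0 := by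
        apply eq_zero_of_gronwall
          (K := (r + a*r + m + cSS*BS + cSI*BI + β*BS + γ)
            + (m + cIS*BS + cII*BI + β*BS + γ + μ))
          (f' := fun x => (r * S x + a * r * I x - m * S x
            - (cSS * S x + cSI * I x) * S x - β * S x * I x + γ * I x,
            -(m * I x) - (cIS * S x + cII * I x) * I x
            + β * S x * I x - γ * I x - μ * I x))
        · exact (hScont.mono hsub).prodMk (hIcont.mono hsub)
        · intro x hx
          have hx0 : (0:ℝ) ≤ x := le_trans ht0nonneg hx.1
          exact ((hsol x hx0).1.prodMk (hsol x hx0).2).hasDerivWithinAt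
        · simp [← hS0t, ← hI0t, Prod.ext_iff]
        · intro x hx
          have h1 : |S x| ≤ BS := by simpa [Real.norm_eq_abs] using hBS x ⟨hx.1, hx.2.le⟩
          have h2 : |I x| ≤ BI := by simpa [Real.norm_eq_abs] using hBI x ⟨hx.1, hx.2.le⟩
          have hM1 : |S x| ≤ max |S x| |I x| := le_max_left _ _
          have hM2 : |I x| ≤ max |S x| |I x| := le_max_right _ _
          have hMnn : (0:ℝ) ≤ max |S x| |I x| := le_trans (abs_nonneg _) hM1
          have pSS : |S x * S x| ≤ BS * max |S x| |I x| := by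
            rw [abs_mul]; exact mul_le_mul h1 hM1 (abs_nonneg _) hBSnn
          have pIS : |I x * S x| ≤ BI * max |S x| |I x| := by
            rw [abs_mul]; exact mul_le_mul h2 hM1 (abs_nonneg _) hBInn
          have pSI : |S x * I x| ≤ BS * max |S x| |I x| := by
            rw [abs_mul]; exact mul_le_mul h1 hM2 (abs_nonneg _) hBSnn
          have pII : |I x * I x| ≤ BI * max |S x| |I x| := by
            rw [abs_mul]; exact mul_le_mul h2 hM2 (abs_nonneg _) hBInn
          obtain ⟨a1, a2⟩ := two r (S x) (max |S x| |I x|) hr.le hM1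
          obtain ⟨b1, b2⟩ := two (a*r) (I x) (max |S x| |I x|) (by positivity) hM2
          obtain ⟨c1, c2⟩ := two m (S x) (max |S x| |I x|) hm.le hM1
          obtain ⟨d1, d2⟩ := two cSS (S x * S x) (BS * max |S x| |I x|) hcSS.le pSS
          obtain ⟨e1, e2⟩ := two cSI (I x * S x) (BI * max |S x| |I x|) hcSI.le pIS
          obtain ⟨f1, f2⟩ := two β (S x * I x) (BS * max |S x| |I x|) hβ.le pSI
          obtain ⟨g1, g2⟩ := two γ (I x) (max |S x| |I x|) hγ.le hM2
          obtain ⟨i1, i2⟩ := two m (I x) (max |S x| |I x|) hm.le hM2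
          obtain ⟨j1, j2⟩ := two cIS (S x * I x) (BS * max |S x| |I x|) hcIS.le pSI
          obtain ⟨k1, k2⟩ := two cII (I x * I x) (BI * max |S x| |I x|) hcII.le pII
          obtain ⟨l1, l2⟩ := two μ (I x) (max |S x| |I x|) hμ.le hM2
          simp only [Prod.norm_def, Real.norm_eq_abs]
          apply max_le
          · rw [abs_le]; constructor <;> linarith
          · rw [abs_le]; constructor <;> linarith
      have hz1 := hfz t1 ⟨ht0le, le_refl _⟩
      simp only [Prod.ext_iff, Prod.fst_zero, Prod.snd_zero] at hz1
      rcases hbad' with h | h <;> linarith [hz1.1, hz1.2]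
    · -- S t0 > 0, I ≡ 0 nearby : S stays positive, contradiction
      obtain ⟨u, hu, hupos⟩ := evpos S hScont hS0t
      obtain ⟨s, hsA, hslt⟩ := happrox (u - t0) (by linarith)
      have hst0 : t0 ≤ s := hAge s hsA
      have hSpos := hupos s ⟨hst0, by linarith⟩
      have hIz := IZ s ⟨hst0, hAle s hsA⟩
      rcases hsA.2 with h | h <;> linarith
  · -- Case I t0 > 0
    have hSt0z : S t0 = 0 := by
      rcases eq_or_lt_of_le hSt0 with h | h
      · exact h.symm
      · exfalso
        obtain ⟨u1, hu1, hp1⟩ := evpos S hScont h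
        obtain ⟨u2, hu2, hp2⟩ := evpos I hIcont hI0t
        obtain ⟨s, hsA, hslt⟩ := happrox (min u1 u2 - t0)
          (by linarith [lt_min hu1 hu2])
        have hst0 : t0 ≤ s := hAge s hsA
        have hsu : s < min u1 u2 := by linarith
        have hS := hp1 s ⟨hst0, lt_of_lt_of_le hsu (min_le_left _ _)⟩
        have hI := hp2 s ⟨hst0, lt_of_lt_of_le hsu (min_le_right _ _)⟩
        rcases hsA.2 with h' | h' <;> linarith
    have hder := (hsol t0 ht0nonneg).1
    have hDpos : 0 < r * S t0 + a * r * I t0 - m * S t0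
        - (cSS * S t0 + cSI * I t0) * S t0 - β * S t0 * I t0 + γ * I t0 := by
      rw [hSt0z]
      have : r * 0 + a * r * I t0 - m * 0 - (cSS * 0 + cSI * I t0) * 0 - β * 0 * I t0 + γ * I t0
          = (a * r + γ) * I t0 := by ring
      rw [this]
      exact mul_pos (by positivity) hI0t
    rw [hasDerivAt_iff_tendsto_slope] at hder
    have hev : ∀ᶠ s in 𝓝[>] t0, 0 < slope S t0 s :=
      (hder.mono_left (nhdsWithin_mono _ (fun x hx => mem_compl_singleton_iff.2 (ne_of_gt hx)))).eventually
        (eventually_gt_nhds hDpos)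
    rw [Filter.eventually_iff, mem_nhdsGT_iff_exists_Ioo_subset] at hev
    obtain ⟨u1, hu1, husub⟩ := hev
    obtain ⟨u2, hu2, hp2⟩ := evpos I hIcont hI0t
    obtain ⟨s, hsA, hslt⟩ := happrox (min u1 u2 - t0)
      (by linarith [lt_min hu1 hu2])
    have hst0 : t0 ≤ s := hAge s hsA
    have hsu : s < min u1 u2 := by linarith
    have hI := hp2 s ⟨hst0, lt_of_lt_of_le hsu (min_le_right _ _)⟩
    rcases eq_or_lt_of_le hst0 with h | h
    · rw [h] at hSt0z hI0t
      rcases hsA.2 with hc | hc <;> linarith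
    · have hslope : 0 < slope S t0 s :=
        husub ⟨h, lt_of_lt_of_le hsu (min_le_left _ _)⟩
      rw [slope_def_field] at hslope
      have hden : 0 < s - t0 := sub_pos.2 h
      have hnum : 0 < S s - S t0 := by
        have hh := mul_pos hslope hden
        rwa [div_mul_cancel₀ _ (ne_of_gt hden)] at hh
      rcases hsA.2 with hc | hc <;> linarith

lemma antitoneOn_of_hasDerivAt_nonpos {f g : ℝ → ℝ}
    (hf : ∀ t ∈ Set.Ici (0:ℝ), HasDerivAt f (g t) t)
    (hg : ∀ t ∈ Set.Ici (0:ℝ), g t ≤ 0) : AntitoneOn f (Set.Ici 0) := by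
  apply antitoneOn_of_deriv_nonpos (convex_Ici 0)
  · exact fun t ht => (hf t ht).continuousAt.continuousWithinAt
  · intro t ht
    rw [interior_Ici] at ht
    exact ((hf t (Set.mem_Ici.2 (le_of_lt (Set.mem_Ioi.1 ht)))).differentiableAt).differentiableWithinAt
  · intro t ht
    rw [interior_Ici] at ht
    rw [(hf t (Set.mem_Ici.2 (le_of_lt (Set.mem_Ioi.1 ht)))).deriv]
    exact hg t (Set.mem_Ici.2 (le_of_lt (Set.mem_Ioi.1 ht)))


/-- Proposition 1: if `r ≤ m` every nonnegative solution tends to the origin. -/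
theorem prop1_extinction
    (r m β γ μ cSS cSI cIS cII a : ℝ)
    (hp : ParamsPos r m β γ μ cSS cSI cIS cII a)
    (hrm : r ≤ m)
    (S I : ℝ → ℝ) (hsol : IsSol r m β γ μ cSS cSI cIS cII a S I)
    (hS0 : 0 ≤ S 0) (hI0 : 0 ≤ I 0) :
    Tendsto (fun t => (S t, I t)) atTop (𝓝 ((0 : ℝ), (0 : ℝ))) := by
  have hnn := sol_nonneg r m β γ μ cSS cSI cIS cII a hp S I hsol hS0 hI0
  obtain ⟨hr, hm, hβ, hγ, hμ, hcSS, hcSI, hcIS, hcII, ha0, ha1⟩ := hp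
  set c : ℝ := min cSS cII with hc
  have hcpos : 0 < c := lt_min hcSS hcII
  set W : ℝ → ℝ := fun t => S t + I t with hW
  set W' : ℝ → ℝ := fun t =>
    (r * S t + a * r * I t - m * S t - (cSS * S t + cSI * I t) * S t - β * S t * I t + γ * I t)
    + (-(m * I t) - (cIS * S t + cII * I t) * I t + β * S t * I t - γ * I t - μ * I t)
    with hW'
  clear_value c W W'
  have hWd : ∀ t ∈ Set.Ici (0:ℝ), HasDerivAt W (W' t) t := by
    intro t ht
    simp only [hW, hW']
    exact (hsol t ht).1.add (hsol t ht).2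
  have har : a * r ≤ m := by nlinarith
  have hWle : ∀ t ∈ Set.Ici (0:ℝ), W' t ≤ -(c/2) * (W t)^2 := by
    intro t ht
    obtain ⟨hSp, hIp⟩ := hnn t ht
    have h1 : c ≤ cSS := by rw [hc]; exact min_le_left _ _
    have h2 : c ≤ cII := by rw [hc]; exact min_le_right _ _
    have e1 : 0 ≤ (cSS - c) * (S t * S t) := mul_nonneg (by linarith) (mul_nonneg hSp hSp)
    have e2 : 0 ≤ (cII - c) * (I t * I t) := mul_nonneg (by linarith) (mul_nonneg hIp hIp)
    have e3 : 0 ≤ (cSI + cIS) * (S t * I t) := mul_nonneg (by linarith) (mul_nonneg hSp hIp)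
    have e4 : 0 ≤ (c/2) * (S t - I t)^2 := mul_nonneg (by linarith) (sq_nonneg _)
    have e5 : 0 ≤ (m - r) * S t := mul_nonneg (by linarith) hSp
    have e6 : 0 ≤ (m + μ - a*r) * I t := mul_nonneg (by linarith) hIp
    simp only [hW', hW]
    nlinarith [e1, e2, e3, e4, e5, e6]
  have hWnonneg : ∀ t ∈ Set.Ici (0:ℝ), 0 ≤ W t := by
    intro t ht
    obtain ⟨hSp, hIp⟩ := hnn t ht
    simp only [hW]; linarith
  have hWanti : AntitoneOn W (Set.Ici 0) := by
    apply antitoneOn_of_hasDerivAt_nonpos hWd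
    intro t ht
    have := hWle t ht
    nlinarith [mul_nonneg hcpos.le (sq_nonneg (W t))]
  -- key claim
  have claim : ∀ ε > (0:ℝ), ∃ T, 0 ≤ T ∧ W T < ε := by
    intro ε hε
    by_contra hcon
    push_neg at hcon
    have hεW : ∀ T, 0 ≤ T → ε ≤ W T := fun T hT => hcon T hT
    set k : ℝ := c/2 * ε^2 with hk
    have hkpos : 0 < k := by rw [hk]; positivity
    clear_value k
    have hVanti : AntitoneOn (fun t => W t + k * t) (Set.Ici 0) := by
      apply antitoneOn_of_hasDerivAt_nonpos (g := fun t => W' t + k)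
      · intro t ht
        simpa using (hWd t ht).fun_add ((hasDerivAt_id t).const_mul k)
      · intro t ht
        have h1 := hWle t ht
        have h2 := hεW t ht
        have h3 : ε^2 ≤ (W t)^2 := by nlinarith
        show W' t + k ≤ 0
        rw [hk]
        nlinarith [mul_nonneg hcpos.le (sub_nonneg.2 h3)]
    set T : ℝ := W 0 / k with hT
    have hT0 : (0:ℝ) ≤ T := div_nonneg (hWnonneg 0 Set.self_mem_Ici) hkpos.le
    have h5 : W T + k * T ≤ W 0 + k * 0 := by
      simpa using hVanti Set.self_mem_Ici (Set.mem_Ici.2 hT0) hT0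
    have h6 : k * T = W 0 := by
      rw [hT]; field_simp
    have h7 := hεW T hT0
    linarith
  have hWto : Tendsto W atTop (𝓝 0) := by
    rw [tendsto_order]
    constructor
    · intro x hx
      filter_upwards [eventually_ge_atTop (0:ℝ)] with t ht
      exact lt_of_lt_of_le hx (hWnonneg t ht)
    · intro x hx
      obtain ⟨T, hT0, hTW⟩ := claim x hx
      filter_upwards [eventually_ge_atTop T] with t ht
      have : W t ≤ W T := hWanti (Set.mem_Ici.2 hT0) (Set.mem_Ici.2 (le_trans hT0 ht)) ht
      linarith
  have hSto : Tendsto S atTop (𝓝 0) := by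
    apply tendsto_of_tendsto_of_tendsto_of_le_of_le' tendsto_const_nhds hWto
    · filter_upwards [eventually_ge_atTop (0:ℝ)] with t ht
      exact (hnn t ht).1
    · filter_upwards [eventually_ge_atTop (0:ℝ)] with t ht
      have := (hnn t ht).2
      simp only [hW]; linarith
  have hIto : Tendsto I atTop (𝓝 0) := by
    apply tendsto_of_tendsto_of_tendsto_of_le_of_le' tendsto_const_nhds hWto
    · filter_upwards [eventually_ge_atTop (0:ℝ)] with t ht
      exact (hnn t ht).2
    · filter_upwards [eventually_ge_atTop (0:ℝ)] with t ht
      have := (hnn t ht).1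
      simp only [hW]; linarith
  exact hSto.prodMk_nhds hIto
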